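/- Let λ, a, b > 0, let x₀ ∈ (-1,1), and let h : [-1,1] → ℝ be defined by h(x) = 0 for x < x₀ and h(x) = -1 for x ≥ x₀. Suppose Φ₀, Φ_h ∈ W^{2,1}(-1,1) satisfy -Φ₀'' = λ(aΦ₀⁺ - bΦ₀⁻) and -Φ_h'' = λ(aΦ_h⁺ - bΦ_h⁻) + h on (x₀,1), with Φ_h(x₀) = Φ₀(x₀), Φ_h'(x₀) = Φ₀'(x₀), and suppose Φ₀ has no zeros on [x₀,1], Φ_h has at most one zero in (x₀,1], and Φ₀ ≥ 0 on (x₀,1). Then Φ_h(x) > Φ₀(x) for all x ∈ (x₀,1]. -/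

import Mathlib

/-- case of Lemma 7.2: the comparison lemma
Φ_h > Φ₀ on (x₀,1]. -/
theorem stmt_9 (lam a b : ℝ) (hlam : 0 < lam) (ha : 0 < a) (hb : 0 < b)
    (x₀ : ℝ) (hx₀ : x₀ ∈ Set.Ioo (-1 : ℝ) 1)
    (h : ℝ → ℝ) (hh : ∀ x : ℝ, h x = if x < x₀ then 0 else -1)
    (Φ0 Φ0' Φh Φh' : ℝ → ℝ)
    (hd0 : ∀ x ∈ Set.Icc x₀ (1 : ℝ), HasDerivAt Φ0 (Φ0' x) x)
    (hd0' : ∀ x ∈ Set.Ioo x₀ (1 : ℝ), HasDerivAt Φ0'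
      (-(lam * (a * max (Φ0 x) 0 - b * max (-Φ0 x) 0))) x)
    (hdh : ∀ x ∈ Set.Icc x₀ (1 : ℝ), HasDerivAt Φh (Φh' x) x)
    (hdh' : ∀ x ∈ Set.Ioo x₀ (1 : ℝ), HasDerivAt Φh'
      (-(lam * (a * max (Φh x) 0 - b * max (-Φh x) 0) + h x)) x)
    (hic : Φh x₀ = Φ0 x₀) (hic' : Φh' x₀ = Φ0' x₀)
    (h0nz : ∀ x ∈ Set.Icc x₀ (1 : ℝ), Φ0 x ≠ 0)
    (hhzero : ∀ x y : ℝ, x ∈ Set.Ioc x₀ 1 → y ∈ Set.Ioc x₀ 1 →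
      Φh x = 0 → Φh y = 0 → x = y)
    (h0pos : ∀ x ∈ Set.Ioo x₀ (1 : ℝ), 0 ≤ Φ0 x) :
    ∀ x ∈ Set.Ioc x₀ (1 : ℝ), Φ0 x < Φh x := by
  obtain ⟨-, hx₀r⟩ := hx₀
  have hx₀Icc : x₀ ∈ Set.Icc x₀ (1:ℝ) := ⟨le_refl _, hx₀r.le⟩
  have hΦ0c : ContinuousOn Φ0 (Set.Icc x₀ 1) :=
    fun y hy => (hd0 y hy).continuousAt.continuousWithinAt
  have hΦhc : ContinuousOn Φh (Set.Icc x₀ 1) :=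
    fun y hy => (hdh y hy).continuousAt.continuousWithinAt
  -- Step A : Φ0 is strictly positive on [x₀, 1]
  have hA : ∀ x ∈ Set.Icc x₀ (1:ℝ), 0 < Φ0 x := by
    intro x hx
    rcases (h0nz x hx).lt_or_gt with hneg | hpos
    · exfalso
      have key : ∀ l : Filter ℝ, l.NeBot → l ≤ nhds x → Set.Ioo x₀ (1:ℝ) ∈ l → False := by
        intro l hl hle hmem
        have hev : ∀ᶠ y in l, Φ0 y < 0 :=
          ((hd0 x hx).continuousAt.tendsto.eventually_lt_const hneg).filter_mono hle
        obtain ⟨y, hy1, hy2⟩ := (hev.and (Filter.eventually_of_mem hmem (fun y hy => hy))).exists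
        exact absurd (h0pos y hy2) (not_le.2 hy1)
      rcases eq_or_lt_of_le hx.2 with he | hlt
      · exact key (nhdsWithin x (Set.Iio x)) inferInstance nhdsWithin_le_nhds
          (Ioo_mem_nhdsLT_of_mem ⟨by rw [he]; exact hx₀r, hx.2⟩)
      · exact key (nhdsWithin x (Set.Ioi x)) inferInstance nhdsWithin_le_nhds
          (Ioo_mem_nhdsGT_of_mem ⟨hx.1, hlt⟩)
    · exact hpos
  have hhval : ∀ x : ℝ, x₀ ≤ x → h x = -1 := fun x hx => by
    rw [hh x]; exact if_neg (not_lt.2 hx)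
  -- second derivative of the difference where Φh is nonnegative
  have hDd' : ∀ x ∈ Set.Ioo x₀ (1:ℝ), 0 ≤ Φh x →
      HasDerivAt (fun y => Φh' y - Φ0' y) (1 - lam * a * (Φh x - Φ0 x)) x := by
    intro x hx hp
    have h0 : (0:ℝ) ≤ Φ0 x := (hA x (Set.Ioo_subset_Icc_self hx)).le
    have H := (hdh' x hx).sub (hd0' x hx)
    refine H.congr_deriv ?_
    rw [hhval x hx.1.le, max_eq_left hp, max_eq_left h0,
      max_eq_right (neg_nonpos.2 hp), max_eq_right (neg_nonpos.2 h0)]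
    ring
  -- Step B1 : a small interval to the right of x₀ where Φh > 0 and lam*a*(Φh-Φ0) < 1
  have hΦhx₀ : 0 < Φh x₀ := by rw [hic]; exact hA x₀ hx₀Icc
  have hU : ∀ᶠ y in nhds x₀, 0 < Φh y ∧ lam * a * (Φh y - Φ0 y) < 1 := by
    have h1 : ∀ᶠ y in nhds x₀, 0 < Φh y :=
      (hdh x₀ hx₀Icc).continuousAt.tendsto.eventually_const_lt hΦhx₀
    have h2 : ∀ᶠ y in nhds x₀, lam * a * (Φh y - Φ0 y) < 1 := by
      have hc : ContinuousAt (fun y => lam * a * (Φh y - Φ0 y)) x₀ :=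
        continuousAt_const.mul ((hdh x₀ hx₀Icc).continuousAt.sub (hd0 x₀ hx₀Icc).continuousAt)
      have hv : lam * a * (Φh x₀ - Φ0 x₀) < 1 := by rw [hic]; simp
      exact hc.tendsto.eventually_lt_const hv
    exact h1.and h2
  obtain ⟨ε, hε, hball⟩ := Metric.eventually_nhds_iff.mp hU
  set δ : ℝ := min (ε/2) ((1-x₀)/2) with hδdef
  have hδ : 0 < δ := lt_min (by linarith) (by linarith)
  have hδ1 : x₀ + δ < 1 := by
    have : δ ≤ (1-x₀)/2 := min_le_right _ _
    linarith
  have hmem : ∀ x ∈ Set.Ioc x₀ (x₀+δ), 0 < Φh x ∧ lam * a * (Φh x - Φ0 x) < 1 := by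
    intro x hx
    apply hball
    rw [Real.dist_eq, abs_of_pos (by linarith [hx.1] : (0:ℝ) < x - x₀)]
    have : δ ≤ ε/2 := min_le_left _ _
    linarith [hx.2]
  have hJsub : Set.Ioo x₀ (x₀+δ) ⊆ Set.Ioo x₀ (1:ℝ) := fun y hy => ⟨hy.1, hy.2.trans hδ1⟩
  have hJIcc : Set.Icc x₀ (x₀+δ) ⊆ Set.Icc x₀ (1:ℝ) := fun y hy => ⟨hy.1, hy.2.trans hδ1.le⟩
  -- Step B2 : the difference Φh - Φ0 is positive on (x₀, x₀+δ]
  have hD'deriv : ∀ x ∈ Set.Ioo x₀ (x₀+δ),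
      HasDerivAt (fun y => Φh' y - Φ0' y) (1 - lam * a * (Φh x - Φ0 x)) x :=
    fun x hx => hDd' x (hJsub hx) (hmem x ⟨hx.1, hx.2.le⟩).1.le
  have hD'mono : StrictMonoOn (fun y => Φh' y - Φ0' y) (Set.Ioo x₀ (x₀+δ)) := by
    apply strictMonoOn_of_deriv_pos (convex_Ioo _ _)
    · exact fun y hy => (hD'deriv y hy).continuousAt.continuousWithinAt
    · intro y hy
      rw [interior_Ioo] at hy
      rw [(hD'deriv y hy).deriv]
      linarith [(hmem y ⟨hy.1, hy.2.le⟩).2]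
  have hD'pos : ∀ x ∈ Set.Ioo x₀ (x₀+δ), 0 < Φh' x - Φ0' x := by
    by_contra hcon
    push_neg at hcon
    obtain ⟨ξ, hξ, hξle⟩ := hcon
    set m : ℝ := (x₀ + ξ)/2 with hmdef
    have hm1 : x₀ < m := by
      have := hξ.1
      rw [hmdef]; linarith
    have hm2 : m < ξ := by
      have := hξ.1
      rw [hmdef]; linarith
    have hmJ : m ∈ Set.Ioo x₀ (x₀+δ) := ⟨hm1, hm2.trans hξ.2⟩
    have hD'm : Φh' m - Φ0' m < 0 := lt_of_lt_of_le (hD'mono hmJ hξ hm2) hξle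
    have hy1le : ∀ y ∈ Set.Ioo x₀ m, y ≤ 1 := by
      intro y hy
      have := hy.2
      have := hm2
      have := hξ.2
      linarith
    have hslope : ∀ y ∈ Set.Ioo x₀ m,
        slope (fun z => Φh z - Φ0 z) x₀ y ≤ Φh' m - Φ0' m := by
      intro y hy
      have hyIcc1 : Set.Icc x₀ y ⊆ Set.Icc x₀ (1:ℝ) :=
        fun z hz => ⟨hz.1, hz.2.trans (hy1le y hy)⟩
      obtain ⟨η, hη, hηeq⟩ := exists_hasDerivAt_eq_slope (fun z => Φh z - Φ0 z)
        (fun z => Φh' z - Φ0' z) hy.1 ((hΦhc.sub hΦ0c).mono hyIcc1)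
        (fun z hz => (hdh z (hyIcc1 (Set.Ioo_subset_Icc_self hz))).sub
          (hd0 z (hyIcc1 (Set.Ioo_subset_Icc_self hz))))
      have hηeq' : Φh' η - Φ0' η = ((Φh y - Φ0 y) - (Φh x₀ - Φ0 x₀)) / (y - x₀) := hηeq
      rw [slope_def_field, ← hηeq']
      have hηJ : η ∈ Set.Ioo x₀ (x₀+δ) := ⟨hη.1, by
        have := hη.2; have := hy.2; have := hm2; have := hξ.2; linarith⟩
      exact (hD'mono hηJ hmJ (hη.2.trans hy.2)).le
    have htd : Filter.Tendsto (slope (fun z => Φh z - Φ0 z) x₀)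
        (nhdsWithin x₀ (Set.Ioi x₀)) (nhds 0) := by
      have H := hasDerivAt_iff_tendsto_slope.mp ((hdh x₀ hx₀Icc).sub (hd0 x₀ hx₀Icc))
      have h0 : Φh' x₀ - Φ0' x₀ = 0 := by rw [hic']; ring
      rw [h0] at H
      exact H.mono_left (nhdsWithin_mono _ (fun z hz => ne_of_gt hz))
    have hev2 : ∀ᶠ y in nhdsWithin x₀ (Set.Ioi x₀),
        slope (fun z => Φh z - Φ0 z) x₀ y ≤ Φh' m - Φ0' m := by
      filter_upwards [Ioo_mem_nhdsGT_of_mem (⟨le_refl x₀, hm1⟩ : x₀ ∈ Set.Ico x₀ m)] with y hy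
      exact hslope y hy
    have hfin : (0:ℝ) ≤ Φh' m - Φ0' m := le_of_tendsto htd hev2
    linarith
  have hDmono : StrictMonoOn (fun y => Φh y - Φ0 y) (Set.Icc x₀ (x₀+δ)) := by
    apply strictMonoOn_of_deriv_pos (convex_Icc _ _)
    · exact (hΦhc.sub hΦ0c).mono hJIcc
    · intro y hy
      rw [interior_Icc] at hy
      show 0 < deriv (Φh - Φ0) y
      rw [((hdh y (hJIcc (Set.Ioo_subset_Icc_self hy))).sub
        (hd0 y (hJIcc (Set.Ioo_subset_Icc_self hy)))).deriv]
      exact hD'pos y hy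
  have hBpos : ∀ x ∈ Set.Ioc x₀ (x₀+δ), 0 < Φh x - Φ0 x := by
    intro x hx
    have H := hDmono (Set.left_mem_Icc.2 (by linarith)) ⟨hx.1.le, hx.2⟩ hx.1
    have H' : Φh x₀ - Φ0 x₀ < Φh x - Φ0 x := H
    have h0 : Φh x₀ - Φ0 x₀ = 0 := by rw [hic]; ring
    linarith
  -- Main argument
  intro x hx
  by_contra hcon
  push_neg at hcon
  set Z : Set ℝ := Set.Icc (x₀+δ) 1 ∩ (fun y => Φh y - Φ0 y) ⁻¹' Set.Iic 0 with hZdef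
  have hZsub : Set.Icc (x₀+δ) 1 ⊆ Set.Icc x₀ (1:ℝ) :=
    fun z hz => ⟨le_trans (by linarith) hz.1, hz.2⟩
  have hZclosed : IsClosed Z :=
    ((hΦhc.sub hΦ0c).mono hZsub).preimage_isClosed_of_isClosed isClosed_Icc isClosed_Iic
  have hxZ : x ∈ Z := by
    refine ⟨⟨?_, hx.2⟩, ?_⟩
    · by_contra hlt
      push_neg at hlt
      have := hBpos x ⟨hx.1, hlt.le⟩
      linarith
    · show Φh x - Φ0 x ∈ Set.Iic 0
      simpa using sub_nonpos.2 hcon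
  have hZbdd : BddBelow Z := ⟨x₀+δ, fun z hz => hz.1.1⟩
  have hx₁mem := hZclosed.csInf_mem ⟨x, hxZ⟩ hZbdd
  set x₁ : ℝ := sInf Z with hx₁def
  have hx₁ge : x₀ + δ ≤ x₁ := hx₁mem.1.1
  have hx₁le : x₁ ≤ 1 := hx₁mem.1.2
  have hx₁gt : x₀ < x₁ := by linarith
  have hx₁Icc : x₁ ∈ Set.Icc x₀ (1:ℝ) := ⟨hx₁gt.le, hx₁le⟩
  have hx₁D : Φh x₁ - Φ0 x₁ ≤ 0 := hx₁mem.2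
  have hDposOn : ∀ y ∈ Set.Ioo x₀ x₁, 0 < Φh y - Φ0 y := by
    intro y hy
    rcases le_or_gt y (x₀+δ) with hc | hc
    · exact hBpos y ⟨hy.1, hc⟩
    · by_contra hneg
      push_neg at hneg
      have hyZ : y ∈ Z := ⟨⟨hc.le, le_trans hy.2.le hx₁le⟩, by
        show Φh y - Φ0 y ∈ Set.Iic 0; simpa using hneg⟩
      exact absurd (csInf_le hZbdd hyZ) (not_le.2 hy.2)
  have hDx₁ : Φh x₁ = Φ0 x₁ := by
    have htd : Filter.Tendsto (fun y => Φh y - Φ0 y) (nhdsWithin x₁ (Set.Iio x₁))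
        (nhds (Φh x₁ - Φ0 x₁)) :=
      ((hdh x₁ hx₁Icc).continuousAt.sub (hd0 x₁ hx₁Icc).continuousAt).tendsto.mono_left
        nhdsWithin_le_nhds
    have hev : ∀ᶠ y in nhdsWithin x₁ (Set.Iio x₁), 0 ≤ Φh y - Φ0 y := by
      filter_upwards [Ioo_mem_nhdsLT_of_mem (⟨hx₁gt, le_refl x₁⟩ : x₁ ∈ Set.Ioc x₀ x₁)] with y hy
      exact (hDposOn y hy).le
    have := ge_of_tendsto htd hev
    linarith
  -- the ratio ρ = Φh / Φ0
  set ρ : ℝ → ℝ := fun y => Φh y / Φ0 y with hρdef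
  have hsub1 : Set.Icc x₀ x₁ ⊆ Set.Icc x₀ (1:ℝ) := fun z hz => ⟨hz.1, hz.2.trans hx₁le⟩
  have hρc : ContinuousOn ρ (Set.Icc x₀ x₁) :=
    (hΦhc.mono hsub1).div (hΦ0c.mono hsub1) (fun y hy => (hA y (hsub1 hy)).ne')
  have hρd : ∀ y ∈ Set.Ioo x₀ x₁,
      HasDerivAt ρ ((Φh' y * Φ0 y - Φh y * Φ0' y) / (Φ0 y)^2) y := by
    intro y hy
    have hyI : y ∈ Set.Icc x₀ (1:ℝ) := hsub1 (Set.Ioo_subset_Icc_self hy)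
    exact (hdh y hyI).div (hd0 y hyI) (hA y hyI).ne'
  set m : ℝ := (x₀ + x₁)/2 with hmdef
  have hm1 : x₀ < m := by rw [hmdef]; linarith
  have hm2 : m < x₁ := by rw [hmdef]; linarith
  have hmI : m ∈ Set.Ioo x₀ x₁ := ⟨hm1, hm2⟩
  have hρm : 1 < ρ m := by
    have h1 := hDposOn m hmI
    have h2 := hA m (hsub1 (Set.Ioo_subset_Icc_self hmI))
    show 1 < Φh m / Φ0 m
    exact (one_lt_div h2).2 (by linarith)
  have hρx₀ : ρ x₀ = 1 := by
    show Φh x₀ / Φ0 x₀ = 1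
    rw [hic]; exact div_self (hA x₀ hx₀Icc).ne'
  have hρx₁ : ρ x₁ = 1 := by
    show Φh x₁ / Φ0 x₁ = 1
    rw [hDx₁]; exact div_self (hA x₁ hx₁Icc).ne'
  obtain ⟨ξ, hξ, hξeq⟩ := exists_hasDerivAt_eq_slope ρ
    (fun y => (Φh' y * Φ0 y - Φh y * Φ0' y) / (Φ0 y)^2) hm1
    (hρc.mono (fun z hz => ⟨hz.1, hz.2.trans hm2.le⟩))
    (fun z hz => hρd z ⟨hz.1, hz.2.trans hm2⟩)
  obtain ⟨η, hη, hηeq⟩ := exists_hasDerivAt_eq_slope ρ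
    (fun y => (Φh' y * Φ0 y - Φh y * Φ0' y) / (Φ0 y)^2) hm2
    (hρc.mono (fun z hz => ⟨le_trans hm1.le hz.1, hz.2⟩))
    (fun z hz => hρd z ⟨lt_trans hm1 hz.1, hz.2⟩)
  have hξI : ξ ∈ Set.Ioo x₀ x₁ := ⟨hξ.1, hξ.2.trans hm2⟩
  have hηI : η ∈ Set.Ioo x₀ x₁ := ⟨hm1.trans hη.1, hη.2⟩
  have hξeq' : (Φh' ξ * Φ0 ξ - Φh ξ * Φ0' ξ) / (Φ0 ξ)^2 = (ρ m - ρ x₀) / (m - x₀) := hξeq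
  have hηeq' : (Φh' η * Φ0 η - Φh η * Φ0' η) / (Φ0 η)^2 = (ρ x₁ - ρ m) / (x₁ - m) := hηeq
  have hWξ : 0 < Φh' ξ * Φ0 ξ - Φh ξ * Φ0' ξ := by
    have hpos : 0 < (ρ m - ρ x₀) / (m - x₀) :=
      div_pos (by rw [hρx₀]; linarith) (by linarith)
    rw [← hξeq'] at hpos
    have hsq : 0 < (Φ0 ξ)^2 := pow_pos (hA ξ (hsub1 (Set.Ioo_subset_Icc_self hξI))) 2
    by_contra hle
    push_neg at hle
    have : (Φh' ξ * Φ0 ξ - Φh ξ * Φ0' ξ) / (Φ0 ξ)^2 ≤ 0 :=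
      div_nonpos_of_nonpos_of_nonneg hle hsq.le
    linarith
  have hWη : Φh' η * Φ0 η - Φh η * Φ0' η < 0 := by
    have hneg : (ρ x₁ - ρ m) / (x₁ - m) < 0 :=
      div_neg_of_neg_of_pos (by rw [hρx₁]; linarith) (by linarith)
    rw [← hηeq'] at hneg
    have hsq : 0 < (Φ0 η)^2 := pow_pos (hA η (hsub1 (Set.Ioo_subset_Icc_self hηI))) 2
    by_contra hle
    push_neg at hle
    have : 0 ≤ (Φh' η * Φ0 η - Φh η * Φ0' η) / (Φ0 η)^2 := div_nonneg hle hsq.le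
    linarith
  have hξη : ξ < η := lt_trans hξ.2 hη.1
  have hsubIoo : Set.Icc ξ η ⊆ Set.Ioo x₀ (1:ℝ) := fun z hz =>
    ⟨lt_of_lt_of_le hξI.1 hz.1, lt_of_le_of_lt hz.2 (lt_of_lt_of_le hηI.2 hx₁le)⟩
  have hsubIcc : Set.Icc ξ η ⊆ Set.Icc x₀ (1:ℝ) :=
    fun z hz => Set.Ioo_subset_Icc_self (hsubIoo hz)
  have hWc : ContinuousOn (fun y => Φh' y * Φ0 y - Φh y * Φ0' y) (Set.Icc ξ η) := by
    apply ContinuousOn.sub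
    · exact ContinuousOn.mul
        (fun y hy => (hdh' y (hsubIoo hy)).continuousAt.continuousWithinAt)
        (hΦ0c.mono hsubIcc)
    · exact ContinuousOn.mul (hΦhc.mono hsubIcc)
        (fun y hy => (hd0' y (hsubIoo hy)).continuousAt.continuousWithinAt)
  have hWd : ∀ y ∈ Set.Ioo ξ η,
      HasDerivAt (fun z => Φh' z * Φ0 z - Φh z * Φ0' z) (Φ0 y) y := by
    intro y hy
    have hy1 : y ∈ Set.Ioo x₀ (1:ℝ) := hsubIoo (Set.Ioo_subset_Icc_self hy)
    have hyIcc : y ∈ Set.Icc x₀ (1:ℝ) := Set.Ioo_subset_Icc_self hy1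
    have hyx : y ∈ Set.Ioo x₀ x₁ := ⟨hy1.1, lt_trans hy.2 hηI.2⟩
    have hΦhy : (0:ℝ) ≤ Φh y := by
      have h1 := hDposOn y hyx
      have h2 := hA y hyIcc
      linarith
    have H := ((hdh' y hy1).mul (hd0 y hyIcc)).sub ((hdh y hyIcc).mul (hd0' y hy1))
    refine H.congr_deriv ?_
    rw [hhval y hy1.1.le, max_eq_left hΦhy, max_eq_left (hA y hyIcc).le,
      max_eq_right (neg_nonpos.2 hΦhy), max_eq_right (neg_nonpos.2 (hA y hyIcc).le)]
    ring
  obtain ⟨ζ, hζ, hζeq⟩ := exists_hasDerivAt_eq_slope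
    (fun z => Φh' z * Φ0 z - Φh z * Φ0' z) Φ0 hξη hWc hWd
  have hζeq' : Φ0 ζ = ((Φh' η * Φ0 η - Φh η * Φ0' η) -
      (Φh' ξ * Φ0 ξ - Φh ξ * Φ0' ξ)) / (η - ξ) := hζeq
  have hζpos := hA ζ (hsubIcc (Set.Ioo_subset_Icc_self hζ))
  have hfinal : ((Φh' η * Φ0 η - Φh η * Φ0' η) -
      (Φh' ξ * Φ0 ξ - Φh ξ * Φ0' ξ)) / (η - ξ) < 0 :=
    div_neg_of_neg_of_pos (by linarith) (by linarith)
  linarith
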